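/- arXiv:2211.01063 — 2 statements merged into one kernel-verified Lean document; each statement's English description precedes it below -/
import Mathlib

section
/- Let y = (y_1,…,y_n) be a list of n positive integers and let x = (x_1,…,x_n) be an invariant parking assortment for y. If k is an index at which x attains its maximum value (k = argmax_{i∈[n]} x_i), then the list obtained from x by deleting its k-th entry is an invariant parking assortment for the restricted car lengths (y_1,…,y_{n−1}). -/
open Classical in
/-- One car attempts to park on a one-way street with spots `1, …, m`: given the set
`occ` of occupied spots, the car with preference `p` and length `l` parks in spots
`j, j+1, …, j+l-1` for the least `j ≥ p` such that these spots all exist (are `≤ m`)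
and are unoccupied; returns the new set of occupied spots, or `none` if parking fails. -/
noncomputable def parkOne (m : ℕ) (occ : Finset ℕ) (p l : ℕ) : Option (Finset ℕ) :=
  if h : ∃ j, p ≤ j ∧ j + l ≤ m + 1 ∧ ∀ k ∈ Finset.Ico j (j + l), k ∉ occ then
    some (occ ∪ Finset.Ico (Nat.find h) (Nat.find h + l))
  else none

/-- Run the parking-assortment process for the cars `(preference, length)` in order. -/
noncomputable def parkList (m : ℕ) : List (ℕ × ℕ) → Finset ℕ → Option (Finset ℕ)
  | [], occ => some occ
  | c :: rest, occ => (parkOne m occ c.1 c.2).bind (parkList m rest)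

open Classical in
lemma parkOne_eq_some_iff {m : ℕ} {occ : Finset ℕ} {p l : ℕ} {occ' : Finset ℕ} :
    parkOne m occ p l = some occ' ↔
      ∃ a, (p ≤ a ∧ a + l ≤ m + 1 ∧ ∀ s ∈ Finset.Ico a (a + l), s ∉ occ) ∧
        (∀ b < a, ¬(p ≤ b ∧ b + l ≤ m + 1 ∧ ∀ s ∈ Finset.Ico b (b + l), s ∉ occ)) ∧
        occ' = occ ∪ Finset.Ico a (a + l) := by
  rw [parkOne]
  split
  · rename_i h
    constructor
    · intro he
      exact ⟨Nat.find h, Nat.find_spec h, fun b hb => Nat.find_min h hb,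
        (Option.some.inj he).symm⟩
    · rintro ⟨a, ha, hmin, rfl⟩
      have hfa : Nat.find h = a := (Nat.find_eq_iff h).mpr ⟨ha, hmin⟩
      rw [hfa]
  · rename_i h
    constructor
    · intro he; exact absurd he (by simp)
    · rintro ⟨a, ha, _, _⟩; exact absurd ⟨a, ha⟩ h

lemma parkList_append (m : ℕ) (l1 l2 : List (ℕ × ℕ)) (occ : Finset ℕ) :
    parkList m (l1 ++ l2) occ = (parkList m l1 occ).bind (parkList m l2) := by
  induction l1 generalizing occ with
  | nil => simp [parkList]
  | cons c t ih =>
    simp only [List.cons_append, parkList]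
    cases parkOne m occ c.1 c.2 with
    | none => simp
    | some o => simp [ih]

lemma parkList_mono {m : ℕ} {cs : List (ℕ × ℕ)} {occ S : Finset ℕ}
    (h : parkList m cs occ = some S) : occ ⊆ S := by
  induction cs generalizing occ with
  | nil => simp [parkList] at h; exact h ▸ Finset.Subset.refl _
  | cons c t ih =>
    rw [parkList] at h
    cases h1 : parkOne m occ c.1 c.2 with
    | none => rw [h1] at h; simp at h
    | some occ1 =>
      rw [h1] at h
      simp only [Option.bind_some] at h
      obtain ⟨a, _, _, rfl⟩ := parkOne_eq_some_iff.mp h1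
      exact fun s hs => ih h (Finset.mem_union_left _ hs)

lemma parkList_interval {m : ℕ} {cs : List (ℕ × ℕ)} {occ S : Finset ℕ}
    (h : parkList m cs occ = some S) {c : ℕ × ℕ} (hc : c ∈ cs) :
    ∃ a, c.1 ≤ a ∧ a + c.2 ≤ m + 1 ∧ Finset.Ico a (a + c.2) ⊆ S := by
  induction cs generalizing occ with
  | nil => simp at hc
  | cons d t ih =>
    rw [parkList] at h
    cases h1 : parkOne m occ d.1 d.2 with
    | none => rw [h1] at h; simp at h
    | some occ1 =>
      rw [h1] at h
      simp only [Option.bind_some] at h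
      rcases List.mem_cons.mp hc with rfl | hct
      · obtain ⟨a, ⟨hpa, ham, _⟩, _, rfl⟩ := parkOne_eq_some_iff.mp h1
        exact ⟨a, hpa, ham, fun s hs =>
          parkList_mono h (Finset.mem_union_right _ hs)⟩
      · exact ih h hct

lemma collapse (m j g : ℕ) (hg : 0 < g) (hjm : j + g ≤ m + 1)
    (cs : List (ℕ × ℕ)) :
    ∀ (occ S : Finset ℕ),
      (∀ c ∈ cs, c.1 ≤ j) → (∀ c ∈ cs, 0 < c.2) →
      parkList m cs occ = some S →
      (∀ s ∈ S, s ∉ Finset.Ico j (j + g)) →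
      parkList (m - g) cs (occ.image (fun s => if s < j then s else s - g)) =
        some (S.image (fun s => if s < j then s else s - g)) := by
  set φ : ℕ → ℕ := fun s => if s < j then s else s - g with hφ
  induction cs with
  | nil =>
    intro occ S _ _ hrun hSG
    simp only [parkList] at hrun ⊢
    rw [Option.some.inj hrun]
  | cons c t ih =>
    intro occ S hp hl hrun hSG
    rw [parkList] at hrun
    cases h1 : parkOne m occ c.1 c.2 with
    | none => rw [h1] at hrun; simp at hrun
    | some occ1 =>
      rw [h1] at hrun
      simp only [Option.bind_some] at hrun
      obtain ⟨a, ⟨hpa, ham, hafree⟩, hamin, hocc1⟩ := parkOne_eq_some_iff.mp h1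
      have hoccS : occ ⊆ S := fun s hs =>
        parkList_mono hrun (hocc1 ▸ Finset.mem_union_left _ hs)
      have hIS : Finset.Ico a (a + c.2) ⊆ S := fun s hs =>
        parkList_mono hrun (hocc1 ▸ Finset.mem_union_right _ hs)
      have hpj : c.1 ≤ j := hp c List.mem_cons_self
      have hlpos : 0 < c.2 := hl c List.mem_cons_self
      have hoccG : ∀ s ∈ occ, ¬(j ≤ s ∧ s < j + g) := by
        intro s hs hc
        exact hSG s (hoccS hs) (Finset.mem_Ico.mpr hc)
      -- the chosen interval avoids the gap
      have hcase : a + c.2 ≤ j ∨ j + g ≤ a := by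
        by_contra hcon
        push_neg at hcon
        have h1 := hSG (max a j) (hIS (Finset.mem_Ico.mpr (by omega)))
        rw [Finset.mem_Ico] at h1
        omega
      -- b0 : image of the chosen start
      obtain ⟨b0, hb0⟩ : ∃ b0, (b0 = a ∧ a + c.2 ≤ j) ∨ (b0 = a - g ∧ j + g ≤ a) := by
        rcases hcase with h | h
        · exact ⟨a, Or.inl ⟨rfl, h⟩⟩
        · exact ⟨a - g, Or.inr ⟨rfl, h⟩⟩
      have hφa : φ a = b0 := by
        simp only [hφ]
        rcases hb0 with ⟨rfl, h⟩ | ⟨rfl, h⟩ <;> [skip; skip] <;> split <;> omega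
      have hkey : parkOne (m - g) (occ.image φ) c.1 c.2 =
          some (occ.image φ ∪ Finset.Ico b0 (b0 + c.2)) := by
        rw [parkOne_eq_some_iff]
        refine ⟨b0, ⟨?_, ?_, ?_⟩, ?_, rfl⟩
        · rcases hb0 with ⟨rfl, h⟩ | ⟨rfl, h⟩ <;> omega
        · rcases hb0 with ⟨rfl, h⟩ | ⟨rfl, h⟩ <;> omega
        · -- freeness of the collapsed interval
          intro s hs hmem
          rw [Finset.mem_Ico] at hs
          obtain ⟨u, hu, hφu⟩ := Finset.mem_image.mp hmem
          have huG : ¬(j ≤ u ∧ u < j + g) := hoccG u hu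
          have huI : a ≤ u ∧ u < a + c.2 := by
            simp only [hφ] at hφu
            rcases hb0 with ⟨rfl, h⟩ | ⟨rfl, h⟩ <;> split at hφu <;> omega
          exact hafree u (Finset.mem_Ico.mpr huI) hu
        · -- minimality
          rintro b hb ⟨hpb, hbm, hbfree⟩
          by_cases hc1 : b + c.2 ≤ j
          · refine hamin b ?_ ⟨hpb, by omega, ?_⟩
            · rcases hb0 with ⟨rfl, h⟩ | ⟨rfl, h⟩ <;> omega
            · intro s hs hsocc
              rw [Finset.mem_Ico] at hs
              refine hbfree s (Finset.mem_Ico.mpr hs) (Finset.mem_image.mpr ⟨s, hsocc, ?_⟩)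
              simp only [hφ]; split <;> omega
          · by_cases hc2 : j ≤ b
            · refine hamin (b + g) ?_ ⟨by omega, by omega, ?_⟩
              · rcases hb0 with ⟨rfl, h⟩ | ⟨rfl, h⟩ <;> omega
              · intro s hs hsocc
                rw [Finset.mem_Ico] at hs
                refine hbfree (s - g) (Finset.mem_Ico.mpr (by omega))
                  (Finset.mem_image.mpr ⟨s, hsocc, ?_⟩)
                simp only [hφ]; split <;> omega
            · -- straddle case: b < j < b + c.2
              push_neg at hc1 hc2
              refine hamin b ?_ ⟨hpb, by omega, ?_⟩
              · rcases hb0 with ⟨rfl, h⟩ | ⟨rfl, h⟩ <;> omega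
              · intro s hs hsocc
                rw [Finset.mem_Ico] at hs
                by_cases hsj : s < j
                · refine hbfree s (Finset.mem_Ico.mpr (by omega))
                    (Finset.mem_image.mpr ⟨s, hsocc, ?_⟩)
                  simp only [hφ]; split <;> omega
                · by_cases hsg : s < j + g
                  · exact hoccG s hsocc ⟨by omega, hsg⟩
                  · refine hbfree (s - g) (Finset.mem_Ico.mpr (by omega))
                      (Finset.mem_image.mpr ⟨s, hsocc, ?_⟩)
                    simp only [hφ]; split <;> omega
      have himg : (Finset.Ico a (a + c.2)).image φ = Finset.Ico b0 (b0 + c.2) := by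
        ext s
        simp only [Finset.mem_image, Finset.mem_Ico, hφ]
        constructor
        · rintro ⟨u, hu, hφu⟩
          rcases hb0 with ⟨rfl, h⟩ | ⟨rfl, h⟩ <;> split at hφu <;> omega
        · intro hs
          rcases hb0 with ⟨rfl, h⟩ | ⟨rfl, h⟩
          · exact ⟨s, by omega, by split <;> omega⟩
          · exact ⟨s + g, by omega, by split <;> omega⟩
      have hocc1img : occ1.image φ = occ.image φ ∪ Finset.Ico b0 (b0 + c.2) := by
        rw [hocc1, Finset.image_union, himg]
      simp only [parkList, hkey, Option.bind_some, ← hocc1img]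
      exact ih occ1 S (fun d hd => hp d (List.mem_cons_of_mem c hd))
        (fun d hd => hl d (List.mem_cons_of_mem c hd)) hrun hSG
/-- `x` is a parking assortment for the list of car lengths `y`. -/
def IsPA (y x : List ℕ) : Prop :=
  x.length = y.length ∧ (∀ a ∈ x, 1 ≤ a ∧ a ≤ y.sum) ∧
    (parkList y.sum (x.zip y) ∅).isSome

/-- `PA y` is the set of parking assortments for `y`. -/
def PA (y : List ℕ) : Set (List ℕ) := {x | IsPA y x}

/-- `PAinv y` is the set of (permutation-)invariant parking assortments for `y`:
those preference lists all of whose rearrangements are parking assortments for `y`. -/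
def PAinv (y : List ℕ) : Set (List ℕ) := {x | ∀ x', x'.Perm x → IsPA y x'}

/-- `y` is minimally invariant if the all-ones list is the only invariant
parking assortment for `y`. -/
def MinInv (y : List ℕ) : Prop := PAinv y = {List.replicate y.length 1}

theorem stmt1 (y x : List ℕ) (hy : ∀ a ∈ y, 0 < a)
    (hx : x ∈ PAinv y)
    (k : ℕ) (hk : k < x.length)
    (hmax : ∀ i < x.length, x.getD i 0 ≤ x.getD k 0) :
    x.eraseIdx k ∈ PAinv y.dropLast := by
  intro x'' hperm''
  obtain ⟨hlen0, hbound0, -⟩ := hx x (List.Perm.refl x)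
  have hyne : y ≠ [] := by
    intro h; rw [h] at hlen0; simp at hlen0
    exact absurd hk (by simp [hlen0])
  set m := y.sum with hm
  set y' := y.dropLast with hy'
  set yn := y.getLast hyne with hyn
  have hysplit : y' ++ [yn] = y := List.dropLast_append_getLast hyne
  have hynpos : 0 < yn := hy yn (by rw [← hysplit]; simp)
  have hsum : y'.sum + yn = m := by
    rw [hm, ← hysplit, List.sum_append]; simp
  set xk := x.getD k 0 with hxk
  have hxkval : xk = x[k] := List.getD_eq_getElem x 0 hk
  have hxkmem : xk ∈ x := hxkval ▸ List.getElem_mem hk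
  -- the permutation x'' ++ [xk] ~ x
  have hxeq : x.take k ++ xk :: x.drop (k + 1) = x := by
    conv_rhs => rw [← List.take_append_drop k x, List.drop_eq_getElem_cons hk, ← hxkval]
  have hperm1 : (x.eraseIdx k ++ [xk]).Perm x := by
    rw [List.eraseIdx_eq_take_drop_succ, List.append_assoc]
    refine (List.Perm.append_left _ List.perm_append_comm).trans ?_
    rw [List.singleton_append, hxeq]
  have hpermfull : (x'' ++ [xk]).Perm x :=
    (hperm''.append_right [xk]).trans hperm1
  obtain ⟨hlen1, hbound1, hsome1⟩ := hx (x'' ++ [xk]) hpermfull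
  -- lengths
  have hxlen'' : x''.length = x.length - 1 := by
    rw [hperm''.length_eq, List.length_eraseIdx]; simp [hk]
  have hylen' : y'.length = y.length - 1 := List.length_dropLast
  have hlen'' : x''.length = y'.length := by omega
  -- split the successful run of x'' ++ [xk]
  have hz : (x'' ++ [xk]).zip y = x''.zip y' ++ [(xk, yn)] := by
    conv_lhs => rw [← hysplit]
    rw [List.zip_append hlen'']
    rfl
  rw [hz, parkList_append] at hsome1
  cases hocc : parkList m (x''.zip y') ∅ with
  | none => rw [hocc] at hsome1; simp at hsome1
  | some occs =>
  rw [hocc, Option.bind_some] at hsome1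
  cases hpo : parkOne m occs xk yn with
  | none => rw [parkList, hpo] at hsome1; simp [parkList] at hsome1
  | some Sf =>
  obtain ⟨jj, ⟨hxkj, hjm, hfree⟩, hjmin, hSf⟩ := parkOne_eq_some_iff.mp hpo
  have hG : ∀ s ∈ occs, s ∉ Finset.Ico jj (jj + yn) := fun s hs hsG => hfree s hsG hs
  -- membership facts
  have hsub : ∀ a ∈ x'', a ∈ x := fun a ha =>
    (x.eraseIdx_sublist k).subset (hperm''.mem_iff.mp ha)
  have hmax' : ∀ a ∈ x, a ≤ xk := by
    intro a ha
    obtain ⟨i, hi, rfl⟩ := List.mem_iff_getElem.mp ha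
    have h := hmax i hi
    rwa [List.getD_eq_getElem x 0 hi] at h
  have hp : ∀ c ∈ x''.zip y', c.1 ≤ jj := fun c hc =>
    le_trans (hmax' c.1 (hsub _ (List.of_mem_zip hc).1)) hxkj
  have hl : ∀ c ∈ x''.zip y', 0 < c.2 := fun c hc =>
    hy c.2 ((List.dropLast_sublist y).subset (List.of_mem_zip hc).2)
  have hcol := collapse m jj yn hynpos hjm (x''.zip y') ∅ occs hp hl hocc hG
  rw [Finset.image_empty] at hcol
  have hm' : y'.sum = m - yn := by omega
  refine ⟨hlen'', ?_, ?_⟩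
  · intro a ha
    refine ⟨(hbound0 a (hsub a ha)).1, ?_⟩
    by_contra hcon
    push_neg at hcon
    obtain ⟨i, hi, rfl⟩ := List.mem_iff_getElem.mp ha
    have hiy : i < y'.length := by omega
    have hiz : i < (x''.zip y').length := by
      rw [List.length_zip]; omega
    have hmemz : (x''[i], y'[i]) ∈ x''.zip y' := by
      have hcz : (x''.zip y')[i] = (x''[i], y'[i]) := List.getElem_zip
      exact hcz ▸ List.getElem_mem hiz
    obtain ⟨s, hs1, hs2, hs3⟩ := parkList_interval hocc hmemz
    have hyipos : 0 < y'[i] := hy _ ((List.dropLast_sublist y).subset (List.getElem_mem hiy))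
    have hsocc : s ∈ occs := hs3 (Finset.mem_Ico.mpr ⟨le_refl s, by omega⟩)
    have hsG := hG s hsocc
    rw [Finset.mem_Ico] at hsG
    have haxk : x''[i] ≤ xk := hmax' _ (hsub _ (List.getElem_mem hi))
    omega
  · rw [hm', hcol]
    rfl
end

section
/- Let c and n be positive integers and y = (c,c,…,c) ∈ ℕ^n the constant list. Then the set of invariant parking sequences for y equals the set of invariant parking assortments for y: PS^inv_n(y) = PA^inv_n(y). -/
open Classical in
/-- One car attempts to park under parking-sequence rules: it locates the least
unoccupied spot `j ≥ p` (with `j ≤ m`) and parks in `j, …, j+l-1` only if these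
spots all exist and are unoccupied; otherwise parking fails. -/
noncomputable def parkOneSeq (m : ℕ) (occ : Finset ℕ) (p l : ℕ) : Option (Finset ℕ) :=
  if h : ∃ j, p ≤ j ∧ j ≤ m ∧ j ∉ occ then
    if Nat.find h + l ≤ m + 1 ∧ ∀ k ∈ Finset.Ico (Nat.find h) (Nat.find h + l), k ∉ occ then
      some (occ ∪ Finset.Ico (Nat.find h) (Nat.find h + l))
    else none
  else none

/-- Run the parking-sequence process for the cars `(preference, length)` in order. -/
noncomputable def parkListSeq (m : ℕ) : List (ℕ × ℕ) → Finset ℕ → Option (Finset ℕ)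
  | [], occ => some occ
  | c :: rest, occ => (parkOneSeq m occ c.1 c.2).bind (parkListSeq m rest)

/-- `x` is a parking sequence for the list of car lengths `y`. -/
def IsPS (y x : List ℕ) : Prop :=
  x.length = y.length ∧ (∀ a ∈ x, 1 ≤ a ∧ a ≤ y.sum) ∧
    (parkListSeq y.sum (x.zip y) ∅).isSome

/-- `PSinv y` is the set of (permutation-)invariant parking sequences for `y`. -/
def PSinv (y : List ℕ) : Set (List ℕ) := {x | ∀ x', x'.Perm x → IsPS y x'}

/-- Structure of a successful `parkOne`. -/
lemma parkOne_some {m : ℕ} {occ : Finset ℕ} {p l : ℕ} {occ' : Finset ℕ}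
    (h : parkOne m occ p l = some occ') :
    ∃ j, p ≤ j ∧ j + l ≤ m + 1 ∧ (∀ k ∈ Finset.Ico j (j + l), k ∉ occ) ∧
      occ' = occ ∪ Finset.Ico j (j + l) ∧
      (∀ j', p ≤ j' → j' + l ≤ m + 1 → (∀ k ∈ Finset.Ico j' (j' + l), k ∉ occ) → j ≤ j') := by
  classical
  unfold parkOne at h
  split_ifs at h with hex
  · refine ⟨Nat.find hex, (Nat.find_spec hex).1, (Nat.find_spec hex).2.1,
      (Nat.find_spec hex).2.2, (Option.some_injective _ h).symm,
      fun j' h1 h2 h3 => Nat.find_min' hex ⟨h1, h2, h3⟩⟩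

/-- `parkOne` succeeds at the witness if the predicate holds. -/
lemma parkOne_eq_some {m : ℕ} {occ : Finset ℕ} {p l j : ℕ}
    (h1 : p ≤ j) (h2 : j + l ≤ m + 1) (h3 : ∀ k ∈ Finset.Ico j (j + l), k ∉ occ)
    (hmin : ∀ j', p ≤ j' → j' + l ≤ m + 1 → (∀ k ∈ Finset.Ico j' (j' + l), k ∉ occ) → j ≤ j') :
    parkOne m occ p l = some (occ ∪ Finset.Ico j (j + l)) := by
  classical
  unfold parkOne
  have hex : ∃ j, p ≤ j ∧ j + l ≤ m + 1 ∧ ∀ k ∈ Finset.Ico j (j + l), k ∉ occ := ⟨j, h1, h2, h3⟩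
  rw [dif_pos hex]
  have : Nat.find hex = j := le_antisymm (Nat.find_min' hex ⟨h1, h2, h3⟩)
    (hmin _ (Nat.find_spec hex).1 (Nat.find_spec hex).2.1 (Nat.find_spec hex).2.2)
  rw [this]
/-- A successful `parkOneSeq` step gives the same result as `parkOne` (for positive length). -/
lemma parkOneSeq_imp_parkOne {m : ℕ} {occ : Finset ℕ} {p l : ℕ} {occ' : Finset ℕ}
    (hl : 0 < l) (h : parkOneSeq m occ p l = some occ') :
    parkOne m occ p l = some occ' := by
  classical
  unfold parkOneSeq at h
  split_ifs at h with hex hin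
  obtain ⟨hj1, hj2⟩ := hin
  set j := Nat.find hex with hjdef
  have hjp : p ≤ j := (Nat.find_spec hex).1
  have hjocc : j ∉ occ := (Nat.find_spec hex).2.2
  have hocc' : occ' = occ ∪ Finset.Ico j (j + l) := (Option.some_injective _ h).symm
  rw [hocc']
  apply parkOne_eq_some hjp hj1 hj2
  intro j' h1 h2 h3
  apply Nat.find_min' hex
  refine ⟨h1, by omega, h3 j' ?_⟩
  simp [Finset.mem_Ico]; omega

/-- A successful sequence process gives the same result as the assortment process. -/
lemma parkListSeq_imp_parkList {m : ℕ} : ∀ (L : List (ℕ × ℕ)) (occ F : Finset ℕ),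
    (∀ q ∈ L, 0 < q.2) → parkListSeq m L occ = some F → parkList m L occ = some F := by
  intro L
  induction L with
  | nil => intro occ F _ h; exact h
  | cons q rest ih =>
    intro occ F hpos h
    rw [parkListSeq] at h
    rw [parkList]
    obtain ⟨occ1, h1, h2⟩ := Option.bind_eq_some_iff.mp h
    rw [parkOneSeq_imp_parkOne (hpos q (by simp)) h1]
    exact ih occ1 F (fun q hq => hpos q (by simp [hq])) h2
/-- The assortment process stays within `[1, m]` and adds exactly the total car length. -/
lemma parkList_card {m : ℕ} : ∀ (L : List (ℕ × ℕ)) (occ F : Finset ℕ),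
    (∀ q ∈ L, 1 ≤ q.1) → occ ⊆ Finset.Icc 1 m → parkList m L occ = some F →
    F ⊆ Finset.Icc 1 m ∧ F.card = occ.card + (L.map Prod.snd).sum ∧ occ ⊆ F := by
  intro L
  induction L with
  | nil => intro occ F _ hsub h; simp_all [parkList]
  | cons q rest ih =>
    intro occ F hq hsub h
    rw [parkList] at h
    obtain ⟨occ1, h1, h2⟩ := Option.bind_eq_some_iff.mp h
    obtain ⟨j, hj1, hj2, hj3, hj4, -⟩ := parkOne_some h1
    have hq1 : 1 ≤ q.1 := hq q (by simp)
    have hblock : Finset.Ico j (j + q.2) ⊆ Finset.Icc 1 m := by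
      intro k hk
      simp only [Finset.mem_Ico] at hk
      simp only [Finset.mem_Icc]
      omega
    have hdisj : Disjoint occ (Finset.Ico j (j + q.2)) := by
      rw [Finset.disjoint_right]
      intro k hk
      exact hj3 k hk
    have hsub1 : occ1 ⊆ Finset.Icc 1 m := by
      rw [hj4]; exact Finset.union_subset hsub hblock
    obtain ⟨hF1, hF2, hF3⟩ := ih occ1 F (fun q hq' => hq q (by simp [hq'])) hsub1 h2
    refine ⟨hF1, ?_, fun a ha => hF3 (by rw [hj4]; exact Finset.mem_union_left _ ha)⟩
    rw [hF2, hj4, Finset.card_union_of_disjoint hdisj, Nat.card_Ico]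
    simp; omega
/-- Modular count of occupied spots strictly below a parked block. -/
lemma parkList_mod {m c p : ℕ} (hc : 0 < c) : ∀ (L : List (ℕ × ℕ)) (occ F : Finset ℕ),
    (∀ q ∈ L, 1 ≤ q.1 ∧ q.2 = c) → Finset.Ico p (p + c) ⊆ occ →
    parkList m L occ = some F →
    (F ∩ Finset.Icc 1 (p - 1)).card ≡ (occ ∩ Finset.Icc 1 (p - 1)).card [MOD c] := by
  intro L
  induction L with
  | nil => intro occ F _ _ h; simp_all [parkList]; rfl
  | cons q rest ih =>
    intro occ F hq hb h
    rw [parkList] at h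
    obtain ⟨occ1, h1, h2⟩ := Option.bind_eq_some_iff.mp h
    obtain ⟨j, hj1, hj2, hj3, hj4, -⟩ := parkOne_some h1
    obtain ⟨hq1, hq2⟩ := hq q (by simp)
    have hb1 : Finset.Ico p (p + c) ⊆ occ1 := by
      rw [hj4]; exact fun a ha => Finset.mem_union_left _ (hb ha)
    have key : (occ1 ∩ Finset.Icc 1 (p - 1)).card ≡
        (occ ∩ Finset.Icc 1 (p - 1)).card [MOD c] := by
      have hdisj : Disjoint (occ ∩ Finset.Icc 1 (p - 1))
          (Finset.Ico j (j + q.2) ∩ Finset.Icc 1 (p - 1)) := by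
        rw [Finset.disjoint_right]
        intro k hk hk'
        simp only [Finset.mem_inter] at hk hk'
        exact hj3 k hk.1 hk'.1
      have hsplit : occ1 ∩ Finset.Icc 1 (p - 1) =
          (occ ∩ Finset.Icc 1 (p - 1)) ∪ (Finset.Ico j (j + q.2) ∩ Finset.Icc 1 (p - 1)) := by
        rw [hj4, Finset.union_inter_distrib_right]
      rw [hsplit, Finset.card_union_of_disjoint hdisj]
      rcases le_or_gt p j with hpj | hpj
      · have : Finset.Ico j (j + q.2) ∩ Finset.Icc 1 (p - 1) = ∅ := by
          apply Finset.eq_empty_of_forall_notMem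
          intro k hk
          simp only [Finset.mem_inter, Finset.mem_Ico, Finset.mem_Icc] at hk
          omega
        rw [this]; simp [Nat.ModEq]
      · have hjc : j + c ≤ p := by
          by_contra hcon
          have hpmem : p ∈ Finset.Ico j (j + q.2) := by
            simp only [Finset.mem_Ico]; omega
          exact hj3 p hpmem (hb (by simp only [Finset.mem_Ico]; omega))
        have : Finset.Ico j (j + q.2) ∩ Finset.Icc 1 (p - 1) = Finset.Ico j (j + q.2) := by
          apply Finset.inter_eq_left.mpr
          intro k hk
          simp only [Finset.mem_Ico] at hk
          simp only [Finset.mem_Icc]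
          omega
        rw [this, Nat.card_Ico, hq2]
        simp [Nat.ModEq, Nat.add_mod]
    exact (ih occ1 F (fun q hq' => hq q (by simp [hq'])) hb1 h2).trans key
/-- `occ` is a union of aligned blocks of length `c`. -/
def Aligned (c : ℕ) (occ : Finset ℕ) : Prop :=
  ∀ j ∈ occ, ∃ q, j ∈ Finset.Ico (q * c + 1) (q * c + 1 + c) ∧
    Finset.Ico (q * c + 1) (q * c + 1 + c) ⊆ occ

lemma block_unique {c : ℕ} (hc : 0 < c) {k q q' : ℕ}
    (h1 : k ∈ Finset.Ico (q * c + 1) (q * c + 1 + c))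
    (h2 : k ∈ Finset.Ico (q' * c + 1) (q' * c + 1 + c)) : q = q' := by
  simp only [Finset.mem_Ico] at h1 h2
  by_contra hne
  rcases Nat.lt_or_ge q q' with h | h
  · have : q + 1 ≤ q' := h
    have : (q + 1) * c ≤ q' * c := Nat.mul_le_mul_right c this
    have : q * c + c ≤ q' * c := by rwa [add_one_mul] at this
    omega
  · rcases Nat.lt_or_ge q' q with h' | h'
    · have : (q' + 1) * c ≤ q * c := Nat.mul_le_mul_right c h'
      have : q' * c + c ≤ q * c := by rwa [add_one_mul] at this
      omega
    · omega

lemma block_exists {c : ℕ} (hc : 0 < c) {k : ℕ} (hk : 1 ≤ k) :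
    ∃ q, k ∈ Finset.Ico (q * c + 1) (q * c + 1 + c) := by
  refine ⟨(k - 1) / c, ?_⟩
  have h1 : (k - 1) / c * c ≤ k - 1 := Nat.div_mul_le_self _ _
  have h2 : k - 1 < (k - 1) / c * c + c := by
    have hm := Nat.div_add_mod (k - 1) c
    have hlt := Nat.mod_lt (k - 1) hc
    have hcm : c * ((k - 1) / c) = (k - 1) / c * c := Nat.mul_comm _ _
    omega
  simp only [Finset.mem_Ico]
  omega
lemma aligned_step {m c q0 : ℕ} (hc : 0 < c) (hm : c ∣ m) {occ : Finset ℕ}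
    (hocc : Aligned c occ) :
    parkOneSeq m occ (q0 * c + 1) c = parkOne m occ (q0 * c + 1) c ∧
    ∀ occ', parkOne m occ (q0 * c + 1) c = some occ' → Aligned c occ' := by
  classical
  set p := q0 * c + 1 with hp
  have hQ12 : ∀ j', (p ≤ j' ∧ j' + c ≤ m + 1 ∧ ∀ k ∈ Finset.Ico j' (j' + c), k ∉ occ) →
      (p ≤ j' ∧ j' ≤ m ∧ j' ∉ occ) := by
    intro j' ⟨h1, h2, h3⟩
    exact ⟨h1, by omega, h3 j' (by simp only [Finset.mem_Ico]; omega)⟩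
  by_cases hex2 : ∃ j, p ≤ j ∧ j ≤ m ∧ j ∉ occ
  · set j := Nat.find hex2 with hjdef
    obtain ⟨hjp, hjm, hjocc⟩ := Nat.find_spec hex2
    -- the least free spot is a block start and its whole block is free
    obtain ⟨q, hjq⟩ := block_exists hc (show 1 ≤ j by omega)
    have hamem : q * c + 1 ∈ Finset.Ico (q * c + 1) (q * c + 1 + c) := by
      simp only [Finset.mem_Ico]; omega
    have haq : q * c + 1 ∉ occ := by
      intro ha
      obtain ⟨q', hmem', hsub'⟩ := hocc _ ha
      have := block_unique hc hmem' hamem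
      subst this
      exact hjocc (hsub' hjq)
    have haj : q * c + 1 ≤ j := (Finset.mem_Ico.mp hjq).1
    have hpa : p ≤ q * c + 1 := by
      have hjlt : j < q * c + 1 + c := (Finset.mem_Ico.mp hjq).2
      have hq0q : q0 ≤ q := by
        by_contra hcon
        have : q + 1 ≤ q0 := by omega
        have : (q + 1) * c ≤ q0 * c := Nat.mul_le_mul_right c this
        rw [add_one_mul] at this
        omega
      have : q0 * c ≤ q * c := Nat.mul_le_mul_right c hq0q
      omega
    have hja : j = q * c + 1 :=
      le_antisymm (Nat.find_min' hex2 ⟨hpa, by omega, haq⟩) haj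
    have hfree : ∀ k ∈ Finset.Ico j (j + c), k ∉ occ := by
      intro k hk hkocc
      obtain ⟨q'', hmem'', hsub''⟩ := hocc _ hkocc
      have hk' : k ∈ Finset.Ico (q * c + 1) (q * c + 1 + c) := by rw [hja] at hk; exact hk
      have := block_unique hc hmem'' hk'
      subst this
      exact haq (hsub'' hamem)
    have hjcm : j + c ≤ m + 1 := by
      obtain ⟨t, ht⟩ := hm
      have hqt : q < t := by
        by_contra hcon
        have : t ≤ q := by omega
        have h1 : t * c ≤ q * c := Nat.mul_le_mul_right c this
        have h2 : c * t = t * c := Nat.mul_comm _ _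
        omega
      have : q + 1 ≤ t := hqt
      have h1 : (q + 1) * c ≤ t * c := Nat.mul_le_mul_right c this
      have h2 : c * t = t * c := Nat.mul_comm _ _
      rw [add_one_mul] at h1
      omega
    have hex1 : ∃ j', p ≤ j' ∧ j' + c ≤ m + 1 ∧ ∀ k ∈ Finset.Ico j' (j' + c), k ∉ occ :=
      ⟨j, hjp, hjcm, hfree⟩
    have hone : parkOne m occ p c = some (occ ∪ Finset.Ico j (j + c)) := by
      apply parkOne_eq_some hjp hjcm hfree
      intro j' h1 h2 h3
      exact Nat.find_min' hex2 (hQ12 j' ⟨h1, h2, h3⟩)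
    constructor
    · rw [hone]
      unfold parkOneSeq
      rw [dif_pos hex2]
      rw [if_pos ⟨hjcm, hfree⟩]
    · intro occ' hocc'
      rw [hone] at hocc'
      have heq : occ' = occ ∪ Finset.Ico j (j + c) := (Option.some_injective _ hocc').symm
      subst heq
      intro k hk
      rcases Finset.mem_union.mp hk with hk' | hk'
      · obtain ⟨q', hmem', hsub'⟩ := hocc _ hk'
        exact ⟨q', hmem', fun a ha => Finset.mem_union_left _ (hsub' ha)⟩
      · refine ⟨q, ?_, fun a ha => Finset.mem_union_right _ ?_⟩
        · rw [← hja]; exact hk'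
        · rw [← hja] at ha; exact ha
  · have hex1 : ¬ ∃ j', p ≤ j' ∧ j' + c ≤ m + 1 ∧ ∀ k ∈ Finset.Ico j' (j' + c), k ∉ occ := by
      intro ⟨j', hj'⟩
      exact hex2 ⟨j', hQ12 j' hj'⟩
    constructor
    · unfold parkOneSeq parkOne
      rw [dif_neg hex2, dif_neg hex1]
    · intro occ' hocc'
      unfold parkOne at hocc'
      rw [dif_neg hex1] at hocc'
      exact absurd hocc' (by simp)
lemma parkListSeq_eq_parkList {m c : ℕ} (hc : 0 < c) (hm : c ∣ m) :
    ∀ (L : List (ℕ × ℕ)) (occ : Finset ℕ),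
    (∀ q ∈ L, q.2 = c ∧ ∃ t, q.1 = t * c + 1) → Aligned c occ →
    parkListSeq m L occ = parkList m L occ := by
  intro L
  induction L with
  | nil => intro occ _ _; rfl
  | cons q rest ih =>
    intro occ hL hal
    obtain ⟨hq2, t, hq1⟩ := hL q (by simp)
    rw [parkListSeq, parkList, hq1, hq2]
    obtain ⟨heq, halstep⟩ := aligned_step (q0 := t) hc hm hal
    rw [heq]
    cases hone : parkOne m occ (t * c + 1) c with
    | none => rfl
    | some occ1 =>
      simp only [Option.bind_some]
      exact ih occ1 (fun q hq => hL q (by simp [hq])) (halstep occ1 hone)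

lemma sum_replicate_eq (n c : ℕ) : (List.replicate n c).sum = n * c := by
  rw [List.sum_replicate, smul_eq_mul]

lemma aligned_empty (c : ℕ) : Aligned c (∅ : Finset ℕ) := by
  intro j hj; simp at hj

/-- Every entry of an invariant parking assortment for constant lengths `c`
starts a block: it is `≡ 1 (mod c)`. -/
lemma entries_block {c n : ℕ} (hc : 0 < c) (hn : 0 < n) {x : List ℕ}
    (hx : x ∈ PAinv (List.replicate n c)) : ∀ p ∈ x, ∃ t, p = t * c + 1 := by
  intro p hp
  set y := List.replicate n c with hy
  have hsum : y.sum = n * c := sum_replicate_eq n c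
  set m := n * c with hm
  have hperm : (p :: x.erase p).Perm x := (List.perm_cons_erase hp).symm
  obtain ⟨hlen, hbnd, hsome⟩ := hx _ hperm
  have hylen : y.length = n := List.length_replicate
  have hylist : y = c :: List.replicate (n - 1) c := by
    rw [hy, ← List.replicate_succ]
    congr 1
    omega
  have hzip : (p :: x.erase p).zip y = (p, c) :: (x.erase p).zip (List.replicate (n - 1) c) := by
    rw [hylist]; rfl
  obtain ⟨F, hF⟩ := Option.isSome_iff_exists.mp hsome
  rw [hsum, hzip, parkList] at hF
  obtain ⟨occ1, h1, h2⟩ := Option.bind_eq_some_iff.mp hF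
  obtain ⟨j, hj1, hj2, hj3, hj4, hmin⟩ := parkOne_some h1
  have hpc : p + c ≤ m + 1 := by omega
  have hjp : j = p := le_antisymm (hmin p le_rfl hpc (by simp)) hj1
  have hocc1 : occ1 = Finset.Ico p (p + c) := by
    rw [hj4, hjp, Finset.empty_union]
  obtain ⟨hp1, hpm⟩ := hbnd p (by simp)
  rw [hsum] at hpm
  -- bounds on the remaining cars
  have hrest : ∀ q ∈ (x.erase p).zip (List.replicate (n - 1) c), 1 ≤ q.1 ∧ q.2 = c := by
    intro q hq
    obtain ⟨hq1, hq2⟩ := List.of_mem_zip hq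
    exact ⟨(hbnd q.1 (by simp [hq1])).1, List.eq_of_mem_replicate hq2⟩
  have hsub1 : occ1 ⊆ Finset.Icc 1 m := by
    rw [hocc1]
    intro k hk
    simp only [Finset.mem_Ico] at hk
    simp only [Finset.mem_Icc]
    omega
  obtain ⟨hF1, hF2, -⟩ := parkList_card _ occ1 F (fun q hq => (hrest q hq).1) hsub1 h2
  -- compute the final cardinality
  have herlen : (x.erase p).length = n - 1 := by
    have := hlen
    rw [hylen] at this
    simp only [List.length_cons] at this
    omega
  have hmapsnd : (((x.erase p).zip (List.replicate (n - 1) c)).map Prod.snd).sum = (n - 1) * c := by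
    rw [List.map_snd_zip (by rw [herlen, List.length_replicate])]
    exact sum_replicate_eq _ _
  have hcard1 : occ1.card = c := by rw [hocc1, Nat.card_Ico]; omega
  obtain ⟨n', rfl⟩ : ∃ n', n = n' + 1 := ⟨n - 1, by omega⟩
  have hFcard : F.card = m := by
    rw [hF2, hmapsnd, hcard1]
    simp only [hm, Nat.add_sub_cancel]
    ring
  have hmpos : 0 < m := Nat.mul_pos hn hc
  have hFeq : F = Finset.Icc 1 m := by
    apply Finset.eq_of_subset_of_card_le hF1
    rw [Nat.card_Icc, hFcard]
    omega
  -- the modular argument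
  have hmod := parkList_mod (p := p) hc _ occ1 F hrest (by rw [hocc1]) h2
  have hint1 : occ1 ∩ Finset.Icc 1 (p - 1) = ∅ := by
    apply Finset.eq_empty_of_forall_notMem
    intro k hk
    rw [hocc1] at hk
    simp only [Finset.mem_inter, Finset.mem_Ico, Finset.mem_Icc] at hk
    omega
  have hint2 : F ∩ Finset.Icc 1 (p - 1) = Finset.Icc 1 (p - 1) := by
    rw [hFeq]
    apply Finset.inter_eq_right.mpr
    exact Finset.Icc_subset_Icc_right (by omega)
  rw [hint1, hint2] at hmod
  simp only [Finset.card_empty] at hmod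
  have hdvd : c ∣ p - 1 := (Nat.modEq_zero_iff_dvd).mp (by
    have : (Finset.Icc 1 (p - 1)).card = p - 1 := by rw [Nat.card_Icc]; omega
    rw [this] at hmod
    exact hmod)
  obtain ⟨t, ht⟩ := hdvd
  have hcm : c * t = t * c := Nat.mul_comm _ _
  exact ⟨t, by omega⟩
theorem stmt4 (c n : ℕ) (hc : 0 < c) (hn : 0 < n) :
    PSinv (List.replicate n c) = PAinv (List.replicate n c) := by
  set y := List.replicate n c with hy
  ext x
  simp only [PSinv, PAinv, Set.mem_setOf_eq]
  constructor
  · intro h x' hperm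
    obtain ⟨h1, h2, h3⟩ := h x' hperm
    refine ⟨h1, h2, ?_⟩
    obtain ⟨F, hF⟩ := Option.isSome_iff_exists.mp h3
    have hpos : ∀ q ∈ x'.zip y, 0 < q.2 := by
      intro q hq
      have := List.eq_of_mem_replicate (List.of_mem_zip hq).2
      omega
    rw [parkListSeq_imp_parkList _ _ _ hpos hF]
    rfl
  · intro h x' hperm
    have hblk := entries_block hc hn h
    obtain ⟨h1, h2, h3⟩ := h x' hperm
    refine ⟨h1, h2, ?_⟩
    have hdvd : c ∣ y.sum := by
      rw [hy, sum_replicate_eq]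
      exact Dvd.intro n (Nat.mul_comm c n)
    rw [parkListSeq_eq_parkList hc hdvd _ _ ?_ (aligned_empty c)]
    · exact h3
    · intro q hq
      obtain ⟨hq1, hq2⟩ := List.of_mem_zip hq
      exact ⟨List.eq_of_mem_replicate hq2, hblk q.1 (hperm.mem_iff.mp hq1)⟩
end
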